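/- For every integer n ≥ 6, the circulant graph C(n; 1, 2) is semi-transitive. -/

import Mathlib

set_option maxHeartbeats 1600000

/-- `D` is an orientation of the simple graph `G`: every edge gets exactly one direction. -/
def SimpleGraph.IsOrientation {V : Type*} (G : SimpleGraph V) (D : V → V → Prop) : Prop :=
  (∀ u v, G.Adj u v ↔ D u v ∨ D v u) ∧ ∀ u v, D u v → ¬ D v u

/-- A digraph (given as a relation) is acyclic: no directed cycle. -/
def DigraphAcyclic {V : Type*} (D : V → V → Prop) : Prop :=
  ∀ v, ¬ Relation.TransGen D v v

/-- `D` is a semi-transitive orientation of `G`: it is an acyclic orientation such that for every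
directed path `p 0 → p 1 → ⋯ → p k`, either `p 0` and `p k` are non-adjacent in `G`, or
`p i → p j` is an arc for all `i < j`. -/
def SimpleGraph.IsSemitransitiveOrientation {V : Type*} (G : SimpleGraph V)
    (D : V → V → Prop) : Prop :=
  G.IsOrientation D ∧ DigraphAcyclic D ∧
    ∀ (k : ℕ) (p : Fin (k + 1) → V),
      (∀ i : Fin k, D (p i.castSucc) (p i.succ)) →
      (¬ G.Adj (p 0) (p (Fin.last k)) ∨ ∀ i j : Fin (k + 1), i < j → D (p i) (p j))

/-- A graph is semi-transitive if it admits a semi-transitive orientation. -/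
def SimpleGraph.Semitransitive {V : Type*} (G : SimpleGraph V) : Prop :=
  ∃ D : V → V → Prop, G.IsSemitransitiveOrientation D

/-- The circulant graph `C(n; S)`: vertex set `ZMod n`, with distinct vertices `i, j` adjacent
iff `i - j ≡ s (mod n)` or `j - i ≡ s (mod n)` for some `s ∈ S`. -/
def circulant (n : ℕ) (S : Set ℤ) : SimpleGraph (ZMod n) :=
  SimpleGraph.fromRel (fun i j => ∃ s ∈ S, i - j = (s : ZMod n))

namespace CircAux

/-- Position function at the level of `val`s, realizing the vertex order
`0, 1, n-2, n-1, 2, 3, …, n-3`. -/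
def F (n a : ℕ) : ℕ :=
  if a = 0 then 0 else if a = 1 then 1 else if a = n-2 then 2 else if a = n-1 then 3 else a + 2

lemma F_eq {n : ℕ} (hn : 6 ≤ n) (a : ℕ) (ha : a < n) :
    (a = 0 ∧ F n a = 0) ∨ (a = 1 ∧ F n a = 1) ∨ (a = n-2 ∧ F n a = 2) ∨
    (a = n-1 ∧ F n a = 3) ∨ (2 ≤ a ∧ a ≤ n-3 ∧ F n a = a + 2) := by
  unfold F; split_ifs <;> omega

lemma F_inj {n a b : ℕ} (hn : 6 ≤ n) (ha : a < n) (hb : b < n) (h : F n a = F n b) : a = b := by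
  have h1 := F_eq hn a ha; have h2 := F_eq hn b hb; omega

lemma mod1 {n a : ℕ} (ha : a < n) : (a+1) % n = if a + 1 = n then 0 else a + 1 := by
  split_ifs with h
  · simp [h]
  · exact Nat.mod_eq_of_lt (by omega)

lemma mod2 {n a : ℕ} (hn : 2 ≤ n) (ha : a < n) :
    (a+2) % n = if a + 2 = n then 0 else if a + 1 = n then 1 else a + 2 := by
  split_ifs with h h'
  · simp [h]
  · have : a + 2 = n + 1 := by omega
    rw [this, Nat.add_mod_left, Nat.mod_eq_of_lt (by omega)]
  · exact Nat.mod_eq_of_lt (by omega)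

/-- Structure of arcs at `val` level. -/
lemma step {n a b : ℕ} (hn : 6 ≤ n) (ha : a < n) (hb : b < n)
    (hadj : b = (a+1)%n ∨ b = (a+2)%n ∨ a = (b+1)%n ∨ a = (b+2)%n)
    (hf : F n a < F n b) :
    (a = 0 ∧ (b=1 ∨ b=2 ∨ b=n-2 ∨ b=n-1)) ∨
    (a = 1 ∧ (b=2 ∨ b=3 ∨ b=n-1)) ∨
    (a = n-2 ∧ (b=n-1 ∨ b=n-4 ∨ b=n-3)) ∨
    (a = n-1 ∧ b = n-3) ∨
    (2 ≤ a ∧ a ≤ n-4 ∧ (b=a+1 ∨ b=a+2) ∧ b ≤ n-3) := by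
  have h1 := F_eq hn a ha; have h2 := F_eq hn b hb
  rw [mod1 ha, mod2 (by omega) ha, mod1 hb, mod2 (by omega) hb] at hadj
  rcases hadj with h|h|h|h <;> split_ifs at h <;>
    rcases h1 with h1|h1|h1|h1|h1 <;> rcases h2 with h2|h2|h2|h2|h2 <;> omega

/-- Structure of adjacency at `val` level. -/
lemma adjv {n a b : ℕ} (hn : 6 ≤ n) (ha : a < n) (hb : b < n)
    (hadj : b = (a+1)%n ∨ b = (a+2)%n ∨ a = (b+1)%n ∨ a = (b+2)%n) :
    b = a+1 ∨ b = a+2 ∨ a = b+1 ∨ a = b+2 ∨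
    (a = n-1 ∧ b = 0) ∨ (a = n-2 ∧ b = 0) ∨ (a = n-1 ∧ b = 1) ∨
    (b = n-1 ∧ a = 0) ∨ (b = n-2 ∧ a = 0) ∨ (b = n-1 ∧ a = 1) := by
  rw [mod1 ha, mod2 (by omega) ha, mod1 hb, mod2 (by omega) hb] at hadj
  rcases hadj with h|h|h|h <;> split_ifs at h <;> omega

/-- The orientation: each edge points from smaller to larger `F`-position. -/
def Dor (n : ℕ) (u v : ZMod n) : Prop :=
  (circulant n {1,2}).Adj u v ∧ F n u.val < F n v.val

variable {n : ℕ}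

lemma dor_adj {u v : ZMod n} (h : Dor n u v) : (circulant n {1,2}).Adj u v := h.1

lemma dor_lt {u v : ZMod n} (h : Dor n u v) : F n u.val < F n v.val := h.2

lemma dor_intro {u v : ZMod n} (h : (circulant n {1,2}).Adj u v)
    (h' : F n u.val < F n v.val) : Dor n u v := ⟨h, h'⟩

lemma adj_val (hn : 6 ≤ n) {u w : ZMod n} (h : (circulant n {1,2}).Adj u w) :
    w.val = (u.val+1)%n ∨ w.val = (u.val+2)%n ∨ u.val = (w.val+1)%n ∨ u.val = (w.val+2)%n := by
  haveI : NeZero n := ⟨by omega⟩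
  haveI : Fact (1 < n) := ⟨by omega⟩
  have h2n : ((2:ℕ) : ZMod n) = 2 := by push_cast; ring
  have hv1 : ∀ z : ZMod n, (z+1).val = (z.val+1)%n := fun z => by
    rw [ZMod.val_add, ZMod.val_one]
  have hv2 : ∀ z : ZMod n, (z+2).val = (z.val+2)%n := fun z => by
    rw [ZMod.val_add, ← h2n, ZMod.val_cast_of_lt (by omega)]
  rw [circulant, SimpleGraph.fromRel_adj] at h
  obtain ⟨hne, hrel⟩ := h
  simp only [Set.mem_insert_iff, Set.mem_singleton_iff] at hrel
  rcases hrel with ⟨s, hs | hs, he⟩ | ⟨s, hs | hs, he⟩ <;> subst hs <;>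
    rw [sub_eq_iff_eq_add] at he
  · right; right; left; rw [he, Int.cast_one, add_comm] at *; exact hv1 w
  · right; right; right
    rw [he] at *; rw [show ((2:ℤ) : ZMod n) = 2 by push_cast; ring, add_comm]; exact hv2 w
  · left; rw [he, Int.cast_one, add_comm] at *; exact hv1 u
  · right; left
    rw [he] at *; rw [show ((2:ℤ) : ZMod n) = 2 by push_cast; ring, add_comm]; exact hv2 u

lemma val_lt' (hn : 6 ≤ n) (u : ZMod n) : u.val < n := by
  haveI : NeZero n := ⟨by omega⟩; exact ZMod.val_lt u

/-- Structure of arcs, at `ZMod` level. -/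
lemma step' (hn : 6 ≤ n) {u v : ZMod n} (h : Dor n u v) :
    (u.val = 0 ∧ (v.val=1 ∨ v.val=2 ∨ v.val=n-2 ∨ v.val=n-1)) ∨
    (u.val = 1 ∧ (v.val=2 ∨ v.val=3 ∨ v.val=n-1)) ∨
    (u.val = n-2 ∧ (v.val=n-1 ∨ v.val=n-4 ∨ v.val=n-3)) ∨
    (u.val = n-1 ∧ v.val = n-3) ∨
    (2 ≤ u.val ∧ u.val ≤ n-4 ∧ (v.val=u.val+1 ∨ v.val=u.val+2) ∧ v.val ≤ n-3) :=
  step hn (val_lt' hn u) (val_lt' hn v) (adj_val hn h.1) h.2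

lemma interior_reach (hn : 6 ≤ n) {u w : ZMod n} (h : Relation.TransGen (Dor n) u w)
    (h2 : 2 ≤ u.val) (h3 : u.val ≤ n-3) : 2 ≤ w.val ∧ w.val ≤ n-3 ∧ u.val < w.val := by
  induction h with
  | single h => have := step' hn h; omega
  | tail _ h ih => have := step' hn h; omega

lemma reach_n1 (hn : 6 ≤ n) {b w : ZMod n} (hb : b.val = n-1)
    (h : Relation.TransGen (Dor n) b w) : w.val = n-3 := by
  induction h with
  | single h => have := step' hn h; omega
  | tail _ h ih => have := step' hn h; omega

/-- No vertex at directed distance ≥ 3 is adjacent to the start. -/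
lemma no_long (hn : 6 ≤ n) {u a b w : ZMod n} (h1 : Dor n u a) (h2 : Dor n a b)
    (h3 : Relation.TransGen (Dor n) b w) : ¬ (circulant n {1,2}).Adj u w := by
  intro hadj
  have s1 := step' hn h1
  have s2 := step' hn h2
  have hav := adjv hn (val_lt' hn u) (val_lt' hn w) (adj_val hn hadj)
  have hwn := val_lt' hn w
  by_cases hb : b.val = n-1
  · have hw := reach_n1 hn hb h3
    rcases s1 with s1|s1|s1|s1|s1 <;> rcases s2 with s2|s2|s2|s2|s2 <;> omega
  · have hw := interior_reach hn h3 (by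
        rcases s1 with s1|s1|s1|s1|s1 <;> rcases s2 with s2|s2|s2|s2|s2 <;> omega) (by
        rcases s1 with s1|s1|s1|s1|s1 <;> rcases s2 with s2|s2|s2|s2|s2 <;> omega)
    rcases s1 with s1|s1|s1|s1|s1 <;> rcases s2 with s2|s2|s2|s2|s2 <;> omega

lemma reach_lt {u w : ZMod n} (h : Relation.TransGen (Dor n) u w) :
    F n u.val < F n w.val := by
  induction h with
  | single h => exact dor_lt h
  | tail _ h ih => exact lt_trans ih (dor_lt h)

lemma path_reach {V : Type*} {D : V → V → Prop} {k : ℕ} (p : Fin (k+1) → V)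
    (hp : ∀ i : Fin k, D (p i.castSucc) (p i.succ)) :
    ∀ j (hj : j < k + 1), ∀ i (hi : i < j), Relation.TransGen D (p ⟨i, by omega⟩) (p ⟨j, hj⟩) := by
  intro j
  induction j with
  | zero => omega
  | succ j ih =>
    intro hj i hi
    have harc : D (p ⟨j, by omega⟩) (p ⟨j+1, hj⟩) := by
      have := hp ⟨j, by omega⟩
      simpa [Fin.castSucc_mk, Fin.succ_mk] using this
    rcases Nat.lt_or_ge i j with h | h
    · exact (ih (by omega) i h).tail harc
    · have : i = j := by omega
      subst this
      exact Relation.TransGen.single harc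

end CircAux

open CircAux in
/-- For every `n ≥ 6`, the circulant graph `C(n; 1, 2)` is semi-transitive. -/
theorem circulant_one_two_semitransitive (n : ℕ) (hn : 6 ≤ n) :
    (circulant n {1, 2}).Semitransitive := by
  haveI : NeZero n := ⟨by omega⟩
  refine ⟨Dor n, ⟨fun u v => ?_, fun u v h h' => absurd (dor_lt h') (not_lt.2 (le_of_lt (dor_lt h)))⟩,
    fun v hc => lt_irrefl _ (reach_lt hc), ?_⟩
  · constructor
    · intro h
      have hne : F n u.val ≠ F n v.val := fun he =>
        h.ne (ZMod.val_injective n (F_inj hn (val_lt' hn u) (val_lt' hn v) he))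
      rcases lt_or_gt_of_ne hne with hlt | hlt
      · exact Or.inl (dor_intro h hlt)
      · exact Or.inr (dor_intro h.symm hlt)
    · rintro (h | h)
      · exact dor_adj h
      · exact (dor_adj h).symm
  · intro k p hp
    match k, p, hp with
    | 0, p, hp =>
      right; intro i j hij
      rw [Fin.lt_def] at hij
      have := i.isLt; have := j.isLt; omega
    | 1, p, hp =>
      right; intro i j hij
      rw [Fin.lt_def] at hij
      have hj := j.isLt; have hi := i.isLt
      have hi0 : i = 0 := Fin.ext (by simp; omega)
      have hj1 : j = 1 := Fin.ext (by simp [Fin.val_one]; omega)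
      subst hi0; subst hj1
      simpa using hp 0
    | 2, p, hp =>
      by_cases hadj : (circulant n {1,2}).Adj (p 0) (p (Fin.last 2))
      · right; intro i j hij
        have h01 : Dor n (p 0) (p 1) := by simpa using hp 0
        have h12 : Dor n (p 1) (p 2) := by simpa using hp 1
        have h02 : Dor n (p 0) (p 2) := by
          refine dor_intro ?_ (lt_trans (dor_lt h01) (dor_lt h12))
          simpa [Fin.last] using hadj
        rw [Fin.lt_def] at hij
        have hj := j.isLt; have hi := i.isLt
        have : (i.val = 0 ∧ j.val = 1) ∨ (i.val = 0 ∧ j.val = 2) ∨ (i.val = 1 ∧ j.val = 2) := by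
          omega
        rcases this with ⟨h1, h2⟩ | ⟨h1, h2⟩ | ⟨h1, h2⟩
        · rw [show i = 0 from Fin.ext (by simpa using h1),
             show j = 1 from Fin.ext (by simpa using h2)]
          exact h01
        · rw [show i = 0 from Fin.ext (by simpa using h1),
             show j = 2 from Fin.ext (by simpa using h2)]
          exact h02
        · rw [show i = 1 from Fin.ext (by simpa using h1),
             show j = 2 from Fin.ext (by simpa using h2)]
          exact h12
      · exact Or.inl hadj
    | (m+3), p, hp =>
      left
      have h01 : Dor n (p ⟨0, by omega⟩) (p ⟨1, by omega⟩) := by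
        have := hp ⟨0, by omega⟩
        simpa [Fin.castSucc_mk, Fin.succ_mk] using this
      have h12 : Dor n (p ⟨1, by omega⟩) (p ⟨2, by omega⟩) := by
        have := hp ⟨1, by omega⟩
        exact this
      have hreach : Relation.TransGen (Dor n) (p ⟨2, by omega⟩) (p ⟨m+3, by omega⟩) :=
        path_reach p hp (m+3) (by omega) 2 (by omega)
      have := no_long hn h01 h12 hreach
      have e0 : (0 : Fin (m+3+1)) = ⟨0, by omega⟩ := rfl
      have el : (Fin.last (m+3)) = ⟨m+3, by omega⟩ := rfl
      rw [e0, el]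
      exact this
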